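/- The LM_n-algebra R_{n,r} of Moisil representable functions L_n^r → L_n (with pointwise operations) is isomorphic to the product over all tuples (a_1,...,a_r) ∈ L_n^r of the subalgebras M(a⃗) = {0,1,a_1,...,a_r,1-a_1,...,1-a_r}, via the map f ↦ (f(a⃗))_{a⃗}. -/

import Mathlib

/-- The underlying set of the standard LM_n-algebra: {0, 1/n, ..., (n-1)/n, 1} ⊆ ℚ. -/
def Ln (n : ℕ) : Set ℚ := {x | ∃ j : ℕ, j ≤ n ∧ x = (j : ℚ) / n}

/-- The Chrysippian endomorphism Δ_i on ℚ: on L_n, Δ_i(j/n) = 1 iff i + j ≥ n + 1. -/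
def Delta (n i : ℕ) (x : ℚ) : ℚ := if (n : ℚ) + 1 ≤ (i : ℚ) + x * n then 1 else 0

/-- Terms in the signature (∨, ∧, N, 0, 1, Δ_1, ..., Δ_n) over variables x_1, ..., x_r. -/
inductive LMTerm (r : ℕ) where
  | var (i : Fin r)
  | zero
  | one
  | neg (t : LMTerm r)
  | sup (t u : LMTerm r)
  | inf (t u : LMTerm r)
  | delta (i : ℕ) (t : LMTerm r)

/-- Evaluation of a term in the standard LM_n-algebra under a valuation φ. -/
def LMTerm.eval (n : ℕ) {r : ℕ} (φ : Fin r → ℚ) : LMTerm r → ℚ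
  | .var i => φ i
  | .zero => 0
  | .one => 1
  | .neg t => 1 - t.eval n φ
  | .sup t u => max (t.eval n φ) (u.eval n φ)
  | .inf t u => min (t.eval n φ) (u.eval n φ)
  | .delta i t => Delta n i (t.eval n φ)

/-- A function is Moisil representable if some term evaluates to it under
every valuation into L_n. -/
def Representable (n r : ℕ) (f : (Fin r → ℚ) → ℚ) : Prop :=
  ∃ t : LMTerm r, ∀ φ : Fin r → ℚ, (∀ i, φ i ∈ Ln n) → t.eval n φ = f φ

/-- The set {0, 1, a_1, ..., a_r, 1 - a_1, ..., 1 - a_r}. -/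
def Mset (r : ℕ) (a : Fin r → ℚ) : Set ℚ :=
  {x | x = 0 ∨ x = 1 ∨ ∃ i : Fin r, x = a i ∨ x = 1 - a i}

/-- Tuples (a_1, ..., a_r) ∈ L_n^r. -/
def DTup (n r : ℕ) := {a : Fin r → ℚ // ∀ i, a i ∈ Ln n}

/-- Representability for functions defined on L_n^r. -/
def RepD (n r : ℕ) (f : DTup n r → ℚ) : Prop :=
  ∃ t : LMTerm r, ∀ a : DTup n r, t.eval n a.1 = f a

section Aux

lemma mem_Ln_bounds {n : ℕ} (hn : 1 ≤ n) {x : ℚ} (hx : x ∈ Ln n) : 0 ≤ x ∧ x ≤ 1 := by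
  obtain ⟨j, hj, rfl⟩ := hx
  have hn' : (0:ℚ) < n := by exact_mod_cast hn
  constructor
  · positivity
  · rw [div_le_one hn']; exact_mod_cast hj

lemma Delta_cases (n i : ℕ) (x : ℚ) : Delta n i x = 0 ∨ Delta n i x = 1 := by
  unfold Delta; split <;> simp

lemma eval_mem_Icc {n r : ℕ} (hn : 1 ≤ n) (t : LMTerm r) (φ : Fin r → ℚ)
    (hφ : ∀ i, φ i ∈ Ln n) : t.eval n φ ∈ Set.Icc (0:ℚ) 1 := by
  induction t with
  | var i => exact ⟨(mem_Ln_bounds hn (hφ i)).1, (mem_Ln_bounds hn (hφ i)).2⟩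
  | zero => simp [LMTerm.eval]
  | one => simp [LMTerm.eval]
  | neg t ih =>
    obtain ⟨h1, h2⟩ := ih
    simp only [LMTerm.eval, Set.mem_Icc]
    constructor <;> linarith
  | sup t u iht ihu =>
    obtain ⟨h1, h2⟩ := iht; obtain ⟨h3, h4⟩ := ihu
    exact ⟨le_max_of_le_left h1, max_le h2 h4⟩
  | inf t u iht ihu =>
    obtain ⟨h1, h2⟩ := iht; obtain ⟨h3, h4⟩ := ihu
    exact ⟨le_min h1 h3, min_le_of_left_le h2⟩
  | delta i t ih =>
    rcases Delta_cases n i (t.eval n φ) with h | h <;>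
      simp [LMTerm.eval, h]

lemma eval_mem_Mset {n r : ℕ} (t : LMTerm r) (φ : Fin r → ℚ) :
    t.eval n φ ∈ Mset r φ := by
  induction t with
  | var i => exact Or.inr (Or.inr ⟨i, Or.inl rfl⟩)
  | zero => exact Or.inl rfl
  | one => exact Or.inr (Or.inl rfl)
  | neg t ih =>
    rcases ih with h | h | ⟨i, h | h⟩
    · exact Or.inr (Or.inl (by simp [LMTerm.eval, h]))
    · exact Or.inl (by simp [LMTerm.eval, h])
    · exact Or.inr (Or.inr ⟨i, Or.inr (by simp [LMTerm.eval, h])⟩)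
    · exact Or.inr (Or.inr ⟨i, Or.inl (by simp [LMTerm.eval, h])⟩)
  | sup t u iht ihu =>
    have h : (LMTerm.sup t u).eval n φ = max (t.eval n φ) (u.eval n φ) := rfl
    rcases max_choice (t.eval n φ) (u.eval n φ) with hm | hm
    · show (LMTerm.sup t u).eval n φ ∈ Mset r φ
      rw [h, hm]; exact iht
    · show (LMTerm.sup t u).eval n φ ∈ Mset r φ
      rw [h, hm]; exact ihu
  | inf t u iht ihu =>
    have h : (LMTerm.inf t u).eval n φ = min (t.eval n φ) (u.eval n φ) := rfl
    rcases min_choice (t.eval n φ) (u.eval n φ) with hm | hm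
    · show (LMTerm.inf t u).eval n φ ∈ Mset r φ
      rw [h, hm]; exact iht
    · show (LMTerm.inf t u).eval n φ ∈ Mset r φ
      rw [h, hm]; exact ihu
  | delta i t ih =>
    rcases Delta_cases n i (t.eval n φ) with h | h
    · exact Or.inl (by simp [LMTerm.eval, h])
    · exact Or.inr (Or.inl (by simp [LMTerm.eval, h]))

/-- Characteristic term: evaluates to 1 at j0/n and to 0 on the rest of L_n. -/
def chiT {r : ℕ} (n j0 : ℕ) (s : LMTerm r) : LMTerm r :=
  .inf (.delta (n + 1 - j0) s) (.neg (.delta (n - j0) s))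

lemma Delta_eval {n : ℕ} (hn : 1 ≤ n) (i j : ℕ) :
    Delta n i ((j:ℚ)/n) = if n + 1 ≤ i + j then 1 else 0 := by
  have hn' : (0:ℚ) < n := by exact_mod_cast hn
  unfold Delta
  rw [div_mul_cancel₀ _ hn'.ne']
  split_ifs with h1 h2 h2
  · rfl
  · exact absurd (by exact_mod_cast h1) h2
  · exact absurd (by exact_mod_cast h2) h1
  · rfl

lemma chiT_eval {n r : ℕ} (hn : 1 ≤ n) {j0 j : ℕ} (hj0 : j0 ≤ n) (hj : j ≤ n)
    (s : LMTerm r) (φ : Fin r → ℚ) (hs : s.eval n φ = (j:ℚ)/n) :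
    (chiT n j0 s).eval n φ = if j = j0 then 1 else 0 := by
  have h1 : (chiT n j0 s).eval n φ =
      min (Delta n (n+1-j0) ((j:ℚ)/n)) (1 - Delta n (n-j0) ((j:ℚ)/n)) := by
    simp [chiT, LMTerm.eval, hs]
  rw [h1, Delta_eval hn, Delta_eval hn]
  rcases lt_trichotomy j j0 with h | h | h
  · rw [if_neg (by omega), if_neg (by omega), if_neg (by omega)]; norm_num
  · rw [if_pos (by omega), if_neg (by omega), if_pos (by omega)]; norm_num
  · rw [if_pos (by omega), if_pos (by omega), if_neg (by omega)]; norm_num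

/-- Characteristic term of the tuple b ∈ L_n^r. -/
def chiTup (n : ℕ) {r : ℕ} (b : Fin r → Fin (n+1)) : LMTerm r :=
  (List.ofFn (fun i => chiT n (b i) (.var i))).foldr .inf .one

lemma eval_foldr_inf {n r : ℕ} (L : List (LMTerm r)) (φ : Fin r → ℚ) :
    (L.foldr LMTerm.inf LMTerm.one).eval n φ = L.foldr (fun t acc => min (t.eval n φ) acc) 1 := by
  induction L with
  | nil => simp [LMTerm.eval]
  | cons h t ih => simp [LMTerm.eval, ih]

lemma eval_foldr_sup {n r : ℕ} (L : List (LMTerm r)) (φ : Fin r → ℚ) :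
    (L.foldr LMTerm.sup LMTerm.zero).eval n φ = L.foldr (fun t acc => max (t.eval n φ) acc) 0 := by
  induction L with
  | nil => simp [LMTerm.eval]
  | cons h t ih => simp [LMTerm.eval, ih]

lemma foldr_fmin_le {α : Type*} (F : α → ℚ) {y : α} :
    ∀ L : List α, y ∈ L → L.foldr (fun z acc => min (F z) acc) 1 ≤ F y := by
  intro L hy
  induction L with
  | nil => cases hy
  | cons h t ih =>
    rcases List.mem_cons.mp hy with rfl | hy'
    · exact min_le_left _ _
    · exact le_trans (min_le_right _ _) (ih hy')

lemma le_foldr_fmin {α : Type*} (F : α → ℚ) {c : ℚ} (hc : c ≤ 1) :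
    ∀ L : List α, (∀ y ∈ L, c ≤ F y) → c ≤ L.foldr (fun z acc => min (F z) acc) 1 := by
  intro L hL
  induction L with
  | nil => exact hc
  | cons h t ih =>
    exact le_min (hL h (by simp)) (ih fun y hy => hL y (by simp [hy]))

lemma le_foldr_fmax {α : Type*} (F : α → ℚ) {y : α} :
    ∀ L : List α, y ∈ L → F y ≤ L.foldr (fun z acc => max (F z) acc) 0 := by
  intro L hy
  induction L with
  | nil => cases hy
  | cons h t ih =>
    rcases List.mem_cons.mp hy with rfl | hy'
    · exact le_max_left _ _
    · exact le_trans (ih hy') (le_max_right _ _)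

lemma foldr_fmax_le {α : Type*} (F : α → ℚ) {c : ℚ} (hc : 0 ≤ c) :
    ∀ L : List α, (∀ y ∈ L, F y ≤ c) → L.foldr (fun z acc => max (F z) acc) 0 ≤ c := by
  intro L hL
  induction L with
  | nil => exact hc
  | cons h t ih =>
    exact max_le (hL h (by simp)) (ih fun y hy => hL y (by simp [hy]))

lemma foldr_fmin_all_one {α : Type*} (F : α → ℚ) :
    ∀ L : List α, (∀ y ∈ L, F y = 1) → L.foldr (fun z acc => min (F z) acc) 1 = 1 := by
  intro L hL
  induction L with
  | nil => rfl
  | cons h t ih =>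
    rw [List.foldr_cons, hL h (by simp), ih fun y hy => hL y (by simp [hy]), min_self]

lemma chiTup_eval {n r : ℕ} (hn : 1 ≤ n) (b : Fin r → Fin (n+1)) (φ : Fin r → ℚ)
    (js : Fin r → ℕ) (hjs : ∀ i, js i ≤ n) (hφ : ∀ i, φ i = (js i : ℚ)/n) :
    ((∀ i, js i = (b i : ℕ)) → (chiTup n b).eval n φ = 1) ∧
    ((¬ ∀ i, js i = (b i : ℕ)) → (chiTup n b).eval n φ = 0) := by
  have key : ∀ i : Fin r, (chiT n (b i) (.var i : LMTerm r)).eval n φ =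
      if js i = (b i : ℕ) then 1 else 0 := fun i =>
    chiT_eval hn (Nat.lt_succ_iff.mp (b i).2) (hjs i) _ φ (hφ i)
  rw [chiTup, eval_foldr_inf]
  constructor
  · intro hall
    apply foldr_fmin_all_one
    intro y hy
    obtain ⟨i, rfl⟩ := List.mem_ofFn.mp hy
    rw [key i, if_pos (hall i)]
  · intro hnot
    push_neg at hnot
    obtain ⟨i, hi⟩ := hnot
    have hmem : (chiT n (b i) (.var i : LMTerm r)) ∈
        List.ofFn (fun i => chiT n (b i) (.var i : LMTerm r)) :=
      List.mem_ofFn.mpr ⟨i, rfl⟩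
    have hle := foldr_fmin_le (LMTerm.eval n φ) _ hmem
    rw [key i, if_neg hi] at hle
    have hge : (0:ℚ) ≤ _ := le_foldr_fmin (LMTerm.eval n φ)
      (by norm_num) _ (by
        intro y hy
        obtain ⟨k, rfl⟩ := List.mem_ofFn.mp hy
        rw [key k]
        split <;> norm_num)
    linarith

/-- The tuple in L_n^r corresponding to b : Fin r → Fin (n+1). -/
def abTup (n r : ℕ) (b : Fin r → Fin (n+1)) : DTup n r :=
  ⟨fun i => ((b i : ℕ) : ℚ)/n, fun i => ⟨(b i : ℕ), Nat.lt_succ_iff.mp (b i).2, rfl⟩⟩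

lemma exists_basic {n r : ℕ} (a : DTup n r) {x : ℚ} (hx : x ∈ Mset r a.1) :
    ∃ s : LMTerm r, s.eval n a.1 = x := by
  rcases hx with h | h | ⟨i, h | h⟩
  exacts [⟨.zero, h.symm⟩, ⟨.one, h.symm⟩, ⟨.var i, h.symm⟩, ⟨.neg (.var i), h.symm⟩]

lemma Mset_bounds {n r : ℕ} (hn : 1 ≤ n) (a : DTup n r) {x : ℚ} (hx : x ∈ Mset r a.1) :
    0 ≤ x ∧ x ≤ 1 := by
  rcases hx with rfl | rfl | ⟨i, rfl | rfl⟩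
  · norm_num
  · norm_num
  · exact mem_Ln_bounds hn (a.2 i)
  · obtain ⟨h1, h2⟩ := mem_Ln_bounds hn (a.2 i)
    constructor <;> linarith

lemma rep_of_sections (n r : ℕ) (hn : 1 ≤ n) (g : (a : DTup n r) → Mset r a.1) :
    ∃ f : {f : DTup n r → ℚ // RepD n r f}, ∀ a, f.1 a = g a := by
  choose s hs using fun b : Fin r → Fin (n+1) =>
    exists_basic (abTup n r b) (g (abTup n r b)).2
  classical
  set L : List (Fin r → Fin (n+1)) := (Finset.univ : Finset (Fin r → Fin (n+1))).toList
    with hL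
  set T : LMTerm r :=
    (L.map (fun b => LMTerm.inf (chiTup n b) (s b))).foldr .sup .zero with hT
  refine ⟨⟨fun a => T.eval n a.1, ⟨T, fun a => rfl⟩⟩, ?_⟩
  intro a
  show T.eval n a.1 = (g a : ℚ)
  choose js hjs1 hjs2 using a.2
  obtain ⟨hga0, hga1⟩ := Mset_bounds hn a (g a).2
  have heval : T.eval n a.1 =
      L.foldr (fun b acc => max ((LMTerm.inf (chiTup n b) (s b)).eval n a.1) acc) 0 := by
    rw [hT, eval_foldr_sup, List.foldr_map]
  set F : (Fin r → Fin (n+1)) → ℚ :=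
    fun b => (LMTerm.inf (chiTup n b) (s b)).eval n a.1 with hFdef
  have hFval : ∀ b, F b = min ((chiTup n b).eval n a.1) ((s b).eval n a.1) := fun b => rfl
  -- the matching tuple
  set ba : Fin r → Fin (n+1) := fun i => ⟨js i, Nat.lt_succ_of_le (hjs1 i)⟩ with hba
  have hba_js : ∀ i, js i = ((ba i : ℕ)) := fun i => rfl
  have haba : abTup n r ba = a := by
    apply Subtype.ext
    funext i
    exact (hjs2 i).symm
  have hchi := fun b => chiTup_eval hn b a.1 js hjs1 hjs2
  have hFba : F ba = (g a : ℚ) := by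
    rw [hFval, (hchi ba).1 hba_js, ← haba]
    have := hs ba
    rw [haba] at this ⊢
    rw [this]
    exact min_eq_right hga1
  have hub : ∀ b ∈ L, F b ≤ (g a : ℚ) := by
    intro b _
    by_cases hb : ∀ i, js i = ((b i : ℕ))
    · have hab : abTup n r b = a := by
        apply Subtype.ext
        funext i
        show ((b i : ℕ) : ℚ)/(n:ℚ) = a.1 i
        rw [hjs2 i, hb i]
      rw [hFval, (hchi b).1 hb]
      have := hs b
      rw [hab] at this
      rw [this]
      exact le_trans (min_le_right _ _) le_rfl
    · rw [hFval, (hchi b).2 hb]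
      have hsb := (eval_mem_Icc hn (s b) a.1 a.2).1
      calc min 0 ((s b).eval n a.1) = 0 := min_eq_left hsb
        _ ≤ (g a : ℚ) := hga0
  have hmem : ba ∈ L := by rw [hL]; exact Finset.mem_toList.mpr (Finset.mem_univ _)
  rw [heval]
  apply le_antisymm
  · exact foldr_fmax_le F hga0 L hub
  · have := le_foldr_fmax F L hmem
    rw [hFba] at this
    exact this

end Aux

/-- The LM_n-algebra R_{n,r} of Moisil representable functions L_n^r → L_n is
isomorphic to the product, over all tuples a⃗ ∈ L_n^r, of the subalgebras
M(a⃗) = {0, 1, a_1, ..., a_r, 1-a_1, ..., 1-a_r}, via the map f ↦ (f(a⃗))_{a⃗}. -/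
theorem representable_iso_product (n r : ℕ) (hn : 2 ≤ n) (hr : 1 ≤ r) :
    ∃ e : {f : DTup n r → ℚ // RepD n r f} ≃ ((a : DTup n r) → (Mset r a.1)),
      ∀ (f : {f : DTup n r → ℚ // RepD n r f}) (a : DTup n r),
        ((e f a : ℚ)) = f.1 a := by
  have hn1 : 1 ≤ n := le_trans (by norm_num) hn
  set F : {f : DTup n r → ℚ // RepD n r f} → ((a : DTup n r) → (Mset r a.1)) :=
    fun f a => ⟨f.1 a, by
      obtain ⟨t, ht⟩ := f.2
      rw [← ht a]
      exact eval_mem_Mset t a.1⟩ with hF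
  have hinj : Function.Injective F := by
    intro f g h
    apply Subtype.ext
    funext a
    exact congrArg Subtype.val (congrFun h a)
  have hsurj : Function.Surjective F := by
    intro g
    obtain ⟨f, hf⟩ := rep_of_sections n r hn1 g
    exact ⟨f, funext fun a => Subtype.ext (hf a)⟩
  exact ⟨Equiv.ofBijective F ⟨hinj, hsurj⟩, fun f a => rfl⟩
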